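/- For any integers k ≥ 3 and d ≥ 2, the Bethe tree B_{d,k} has exactly k main eigenvalues; that is, the set of main eigenvalues of B_{d,k} has cardinality exactly k. -/

import Mathlib

open Matrix Finset

/-- `G` is a generalized Bethe tree `B(d₁, …, d_{k-1})` with `k` levels and root `r`:
it is a tree, each `dᵢ ≥ 2`, every vertex at distance `i - 1` from `r` has degree `dᵢ`
(for `1 ≤ i ≤ k - 1`), every vertex at distance `k - 1` from `r` has degree `1`, and
every vertex is at distance at most `k - 1` from `r`. -/
def IsGenBetheTree {V : Type*} (G : SimpleGraph V) (r : V) (k : ℕ) (d : ℕ → ℕ) : Prop :=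
  G.IsTree ∧
  (∀ i, 1 ≤ i → i ≤ k - 1 → 2 ≤ d i) ∧
  (∀ i, 1 ≤ i → i ≤ k - 1 → ∀ v, G.dist r v = i - 1 → (G.neighborSet v).ncard = d i) ∧
  (∀ v : V, G.dist r v = k - 1 → (G.neighborSet v).ncard = 1) ∧
  (∀ v : V, G.dist r v ≤ k - 1)

open scoped Classical in
/-- The adjacency matrix of `G` over `ℝ`. -/
noncomputable def adjMat {V : Type*} [Fintype V] (G : SimpleGraph V) : Matrix V V ℝ :=
  Matrix.of fun v w => if G.Adj v w then (1 : ℝ) else 0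

/-- The set of main eigenvalues of `G`: those `λ` admitting a real eigenvector of the
adjacency matrix whose entry sum is nonzero. -/
noncomputable def mainSpectrum {V : Type*} [Fintype V] (G : SimpleGraph V) : Set ℝ :=
  {lam : ℝ | ∃ x : V → ℝ, (adjMat G).mulVec x = lam • x ∧ ∑ v, x v ≠ 0}

/-! ### Auxiliary material -/

section GraphStructure

open SimpleGraph

variable {V : Type*} {G : SimpleGraph V} {r v w : V} {k d : ℕ}

/-- In a tree, adjacent vertices have distances to `r` differing by exactly one. -/
lemma tree_adj_dist [DecidableEq V] (hT : G.IsTree) (hvw : G.Adj v w) :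
    G.dist r w = G.dist r v + 1 ∨ G.dist r v = G.dist r w + 1 := by
  have hc := hT.isConnected
  have h1 : G.dist v w = 1 := by
    rw [SimpleGraph.dist_eq_one_iff_adj]; exact hvw
  have hle1 : G.dist r w ≤ G.dist r v + 1 := by
    have := hc.dist_triangle (u := r) (v := v) (w := w); omega
  have hle2 : G.dist r v ≤ G.dist r w + 1 := by
    have h1' : G.dist w v = 1 := by
      rw [SimpleGraph.dist_eq_one_iff_adj]; exact hvw.symm
    have := hc.dist_triangle (u := r) (v := w) (w := v); omega
  by_contra hcon
  push_neg at hcon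
  have heq : G.dist r v = G.dist r w := by omega
  obtain ⟨p, hp, hpl⟩ := hc.exists_path_of_dist r v
  obtain ⟨q, hq, hql⟩ := hc.exists_path_of_dist r w
  have hvq : v ∉ q.support := by
    intro hmem
    have hsplit := q.take_spec hmem
    have hlen : (q.takeUntil v hmem).length + (q.dropUntil v hmem).length = q.length := by
      conv_rhs => rw [← hsplit]
      rw [SimpleGraph.Walk.length_append]
    have hdrop : 1 ≤ (q.dropUntil v hmem).length := by
      have := SimpleGraph.dist_le (q.dropUntil v hmem)
      omega
    have htake : G.dist r v ≤ (q.takeUntil v hmem).length := SimpleGraph.dist_le _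
    omega
  have hq' : (q.concat hvw.symm).IsPath := by
    rw [← SimpleGraph.Walk.isPath_reverse_iff, SimpleGraph.Walk.reverse_concat]
    rw [SimpleGraph.Walk.cons_isPath_iff]
    refine ⟨hq.reverse, ?_⟩
    rw [SimpleGraph.Walk.support_reverse, List.mem_reverse]
    exact hvq
  have huniq := hT.existsUnique_path r v
  obtain ⟨P, -, hP⟩ := huniq
  have e1 : p = P := hP p hp
  have e2 : q.concat hvw.symm = P := hP _ hq'
  have : p.length = (q.concat hvw.symm).length := by rw [e1, e2]
  rw [SimpleGraph.Walk.length_concat] at this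
  omega

/-- Existence and uniqueness of the parent. -/
lemma tree_parent [DecidableEq V] (hT : G.IsTree) {i : ℕ} (hv : G.dist r v = i + 1) :
    ∃! w : V, G.Adj v w ∧ G.dist r w = i := by
  have hc := hT.isConnected
  obtain ⟨p, hp, hpl⟩ := hc.exists_path_of_dist r v
  have hrv : r ≠ v := by
    intro h; subst h; simp [SimpleGraph.dist_self] at hv
  obtain ⟨w0, h0, q0, hq0⟩ := SimpleGraph.Walk.exists_eq_cons_of_ne (Ne.symm hrv) p.reverse
  have hq0len : q0.length = i := by
    have : p.reverse.length = p.length := SimpleGraph.Walk.length_reverse _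
    rw [hq0] at this
    simp only [SimpleGraph.Walk.length_cons] at this
    omega
  have hdistw0 : G.dist r w0 = i := by
    have hle : G.dist r w0 ≤ i := by
      have := SimpleGraph.dist_le q0.reverse
      rw [SimpleGraph.Walk.length_reverse, hq0len] at this
      exact this
    have := tree_adj_dist (r := r) hT h0
    omega
  refine ⟨w0, ⟨h0, hdistw0⟩, ?_⟩
  have key : ∀ w : V, G.Adj v w → G.dist r w = i → ∀ w' : V, G.Adj v w' → G.dist r w' = i →
      w = w' := by
    intro w hw hdw w' hw' hdw'
    obtain ⟨q, hq, hql⟩ := hc.exists_path_of_dist r w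
    obtain ⟨q', hq', hql'⟩ := hc.exists_path_of_dist r w'
    have hvnot : ∀ (z : V) (s : G.Walk r z), s.IsPath → s.length = i → v ∉ s.support := by
      intro z s _ hsl hmem
      have htake : G.dist r v ≤ (s.takeUntil v hmem).length := SimpleGraph.dist_le _
      have := SimpleGraph.Walk.length_takeUntil_le s hmem
      omega
    have P1 : (q.concat hw.symm).IsPath := by
      rw [← SimpleGraph.Walk.isPath_reverse_iff, SimpleGraph.Walk.reverse_concat,
        SimpleGraph.Walk.cons_isPath_iff]
      exact ⟨hq.reverse, by
        rw [SimpleGraph.Walk.support_reverse, List.mem_reverse]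
        exact hvnot w q hq (by omega)⟩
    have P2 : (q'.concat hw'.symm).IsPath := by
      rw [← SimpleGraph.Walk.isPath_reverse_iff, SimpleGraph.Walk.reverse_concat,
        SimpleGraph.Walk.cons_isPath_iff]
      exact ⟨hq'.reverse, by
        rw [SimpleGraph.Walk.support_reverse, List.mem_reverse]
        exact hvnot w' q' hq' (by omega)⟩
    obtain ⟨P, -, hP⟩ := hT.existsUnique_path r v
    have e1 : q.concat hw.symm = P := hP _ P1
    have e2 : q'.concat hw'.symm = P := hP _ P2
    obtain ⟨hv', -⟩ := SimpleGraph.Walk.concat_inj (e1.trans e2.symm)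
    exact hv'
  intro w' hw'
  exact (key w' hw'.1 hw'.2 w0 h0 hdistw0)

variable [Fintype V]

open scoped Classical in
/-- The level set at distance `i` from the root. -/
noncomputable def lev (G : SimpleGraph V) (r : V) (i : ℕ) : Finset V :=
  univ.filter (fun v => G.dist r v = i)

open scoped Classical in
/-- Neighbors of `v` at distance `j` from the root. -/
noncomputable def nbr (G : SimpleGraph V) (r : V) (v : V) (j : ℕ) : Finset V :=
  univ.filter (fun w => G.Adj v w ∧ G.dist r w = j)

lemma mem_lev {i : ℕ} : v ∈ lev G r i ↔ G.dist r v = i := by classical simp [lev]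

lemma mem_nbr {j : ℕ} : w ∈ nbr G r v j ↔ G.Adj v w ∧ G.dist r w = j := by classical simp [nbr]

open scoped Classical in
lemma ncard_neighborSet_eq (v : V) :
    (G.neighborSet v).ncard = (G.neighborFinset v).card := by
  classical
  rw [Set.ncard_eq_toFinset_card']
  congr 1

lemma parent_card (hT : G.IsTree) {i : ℕ} (hv : G.dist r v = i + 1) :
    (nbr G r v i).card = 1 := by
  classical
  obtain ⟨w0, hw0, huniq⟩ := tree_parent hT hv
  rw [Finset.card_eq_one]
  refine ⟨w0, ?_⟩
  ext w
  simp only [Finset.mem_singleton, mem_nbr]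
  constructor
  · intro h; exact huniq w h
  · rintro rfl; exact hw0

open scoped Classical in
lemma nbr_union (hT : G.IsTree) {i : ℕ} (hv : G.dist r v = i) :
    G.neighborFinset v = nbr G r v (i+1) ∪ nbr G r v (i-1) ∧
      Disjoint (nbr G r v (i+1)) (nbr G r v (i-1)) := by
  classical
  constructor
  · ext w
    simp only [SimpleGraph.mem_neighborFinset, Finset.mem_union, mem_nbr]
    constructor
    · intro h
      rcases tree_adj_dist (r := r) hT h with h1 | h1
      · left; exact ⟨h, by omega⟩
      · right
        refine ⟨h, ?_⟩
        omega
    · rintro (⟨h, -⟩ | ⟨h, -⟩) <;> exact h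
  · rw [Finset.disjoint_left]
    intro w h1 h2
    rw [mem_nbr] at h1 h2
    have hi : i ≠ 0 := by
      intro h; subst h
      omega
    omega

lemma nbr_split (hT : G.IsTree) {i : ℕ} (hv : G.dist r v = i) :
    (G.neighborSet v).ncard = (nbr G r v (i+1)).card + (nbr G r v (i-1)).card := by
  classical
  obtain ⟨hsub, hdisj⟩ := nbr_union hT hv
  rw [ncard_neighborSet_eq, hsub, Finset.card_union_of_disjoint hdisj]

lemma root_nbr_zero (hT : G.IsTree) (hv : G.dist r v = 0) :
    (nbr G r v 0).card = 0 := by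
  classical
  rw [Finset.card_eq_zero]
  ext w
  simp only [mem_nbr, Finset.notMem_empty, iff_false]
  rintro ⟨hadj, hw⟩
  have h1 : r = v := hT.isConnected.dist_eq_zero_iff.mp hv
  have h2 : r = w := hT.isConnected.dist_eq_zero_iff.mp hw
  subst h1; subst h2
  exact G.loopless.irrefl _ hadj

lemma double_count {i : ℕ} :
    ∑ v ∈ lev G r i, (nbr G r v (i+1)).card
      = ∑ w ∈ lev G r (i+1), (nbr G r w i).card := by
  classical
  set E : Finset (V × V) :=
    univ.filter (fun p => G.dist r p.1 = i ∧ G.Adj p.1 p.2 ∧ G.dist r p.2 = i+1) with hE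
  have h1 : E.card = ∑ v ∈ lev G r i, (nbr G r v (i+1)).card := by
    rw [Finset.card_eq_sum_card_fiberwise
      (f := Prod.fst) (t := lev G r i) (by
        intro p hp
        rw [hE, Finset.mem_coe, Finset.mem_filter] at hp
        rw [Finset.mem_coe, mem_lev]
        exact hp.2.1)]
    refine Finset.sum_congr rfl ?_
    intro v hv
    refine Finset.card_bij (fun p _ => p.2) ?_ ?_ ?_
    · intro p hp
      simp only [Finset.mem_filter, hE, Finset.mem_univ, true_and] at hp
      obtain ⟨⟨h3, h4a, h4b⟩, h5⟩ := hp
      show p.2 ∈ nbr G r v (i+1)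
      rw [mem_nbr, ← h5]
      exact ⟨h4a, h4b⟩
    · intro p hp q hq hpq
      simp only [Finset.mem_filter, hE] at hp hq
      exact Prod.ext (hp.2.trans hq.2.symm) hpq
    · intro w hw
      rw [mem_nbr] at hw
      rw [mem_lev] at hv
      exact ⟨(v, w), by simp [hE, hv, hw.1, hw.2], rfl⟩
  have h2 : E.card = ∑ w ∈ lev G r (i+1), (nbr G r w i).card := by
    rw [Finset.card_eq_sum_card_fiberwise
      (f := Prod.snd) (t := lev G r (i+1)) (by
        intro p hp
        rw [hE, Finset.mem_coe, Finset.mem_filter] at hp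
        rw [Finset.mem_coe, mem_lev]
        exact hp.2.2.2)]
    refine Finset.sum_congr rfl ?_
    intro w hw
    refine Finset.card_bij (fun p _ => p.1) ?_ ?_ ?_
    · intro p hp
      simp only [Finset.mem_filter, hE, Finset.mem_univ, true_and] at hp
      obtain ⟨⟨h3, h4a, h4b⟩, h5⟩ := hp
      show p.1 ∈ nbr G r w i
      rw [h5] at h4a
      rw [mem_nbr]
      exact ⟨h4a.symm, h3⟩
    · intro p hp q hq hpq
      simp only [Finset.mem_filter, hE] at hp hq
      exact Prod.ext hpq (hp.2.trans hq.2.symm)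
    · intro u hu
      rw [mem_nbr] at hu
      rw [mem_lev] at hw
      exact ⟨(u, w), by simp [hE, hw, hu.1.symm, hu.2], rfl⟩
  rw [← h1, h2]

lemma sum_levelwise (hbd : ∀ v : V, G.dist r v ≤ k - 1) (hk : 1 ≤ k) (f : ℕ → ℝ) :
    ∑ v : V, f (G.dist r v) = ∑ i ∈ Finset.range k, (lev G r i).card * f i := by
  classical
  rw [← Finset.sum_fiberwise_of_maps_to (g := fun v => G.dist r v) (t := Finset.range k)
    (by intro v _; rw [Finset.mem_range]; show G.dist r v < k; have := hbd v; omega)]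
  refine Finset.sum_congr rfl ?_
  intro i _
  have : ∀ v ∈ univ.filter (fun v => G.dist r v = i), f (G.dist r v) = f i := by
    intro v hv
    rw [Finset.mem_filter] at hv
    rw [hv.2]
  rw [Finset.sum_congr rfl this, Finset.sum_const, lev]
  simp [mul_comm]

variable (hk : 3 ≤ k) (hd : 2 ≤ d)
  (hT : IsGenBetheTree G r k (fun i => if i = 1 then d else d + 1))
include hk hd hT

/-- every non-bottom vertex has exactly `d` children. -/
lemma child_card {i : ℕ} (hik : i ≤ k - 2) (hv : G.dist r v = i) :
    (nbr G r v (i+1)).card = d := by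
  classical
  have htree := hT.1
  have hsplit := nbr_split htree hv
  rcases Nat.eq_zero_or_pos i with hi | hi
  · subst hi
    have hdeg : (G.neighborSet v).ncard = d := by
      have := hT.2.2.1 1 le_rfl (by omega) v (by simpa using hv)
      simpa using this
    rw [hdeg] at hsplit
    have h0 : (nbr G r v (0 - 1)).card = 0 := by
      simpa using root_nbr_zero htree hv
    omega
  · have hdeg : (G.neighborSet v).ncard = d + 1 := by
      have := hT.2.2.1 (i+1) (by omega) (by omega) v (by simpa using hv)
      simp only [Nat.add_sub_cancel] at this
      rw [this, if_neg (by omega)]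
    rw [hdeg] at hsplit
    have hp : (nbr G r v (i-1)).card = 1 := by
      have : G.dist r v = (i-1) + 1 := by omega
      exact parent_card htree this
    omega

/-- bottom vertices have no children. -/
lemma leaf_card (hv : G.dist r v = k - 1) :
    (nbr G r v k).card = 0 := by
  classical
  have htree := hT.1
  have hsplit := nbr_split htree hv
  have hdeg : (G.neighborSet v).ncard = 1 := hT.2.2.2.1 v hv
  rw [hdeg] at hsplit
  have hp : (nbr G r v (k-1-1)).card = 1 := by
    have : G.dist r v = (k-1-1) + 1 := by omega
    exact parent_card htree this
  have : (nbr G r v (k-1+1)).card = 0 := by omega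
  have hkk : k - 1 + 1 = k := by omega
  rwa [hkk] at this

/-- The level sizes are powers of `d`. -/
lemma lev_card : ∀ i : ℕ, i ≤ k - 1 → (lev G r i).card = d ^ i := by
  intro i
  induction i with
  | zero =>
    intro _
    have : lev G r 0 = {r} := by
      ext v
      rw [mem_lev, Finset.mem_singleton]
      constructor
      · intro h; exact (hT.1.isConnected.dist_eq_zero_iff.mp h).symm
      · rintro rfl; exact SimpleGraph.dist_self
    rw [this]
    simp
  | succ i ih =>
    intro hik
    have hdc := double_count (G := G) (r := r) (i := i)
    have hL : ∑ v ∈ lev G r i, (nbr G r v (i+1)).card = d * (lev G r i).card := by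
      rw [Finset.sum_congr rfl (fun v hv => child_card hk hd hT (by omega) (mem_lev.mp hv))]
      rw [Finset.sum_const]
      ring
    have hR : ∑ w ∈ lev G r (i+1), (nbr G r w i).card = (lev G r (i+1)).card := by
      rw [Finset.sum_congr rfl (fun w hw => parent_card hT.1 (mem_lev.mp hw))]
      simp
    rw [hL, hR] at hdc
    rw [← hdc, ih (by omega), pow_succ]
    ring

end GraphStructure

/-- Entries of the putative eigenvector, as a function of the level. -/
noncomputable def btf (d : ℕ) (θ : ℝ) (i : ℕ) : ℝ :=
  Real.sin ((i + 1) * θ) * ((Real.sqrt d)⁻¹) ^ i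

/-- The corresponding eigenvalue. -/
noncomputable def btlam (d : ℕ) (θ : ℝ) : ℝ := 2 * Real.sqrt d * Real.cos θ

section Recurrences

variable {d : ℕ} (hd : 1 ≤ d) (θ : ℝ)
include hd

lemma btf_rec0 : (d : ℝ) * btf d θ 1 = btlam d θ * btf d θ 0 := by
  have hs : (0:ℝ) < Real.sqrt d := Real.sqrt_pos.mpr (by exact_mod_cast hd)
  have hss : Real.sqrt d * Real.sqrt d = (d:ℝ) := Real.mul_self_sqrt (by positivity)
  have hdt : (d : ℝ) * (Real.sqrt d)⁻¹ = Real.sqrt d := by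
    rw [eq_comm, eq_mul_inv_iff_mul_eq₀ hs.ne']; exact hss
  unfold btf btlam
  rw [show ((1:ℕ) + 1 : ℝ) * θ = 2 * θ by push_cast; ring]
  rw [Real.sin_two_mul]
  rw [show ((0:ℕ) + 1 : ℝ) * θ = θ by push_cast; ring]
  rw [pow_one, pow_zero]
  linear_combination (2 * Real.sin θ * Real.cos θ) * hdt

lemma btf_rec (i : ℕ) :
    btf d θ i + (d : ℝ) * btf d θ (i + 2) = btlam d θ * btf d θ (i + 1) := by
  have hs : (0:ℝ) < Real.sqrt d := Real.sqrt_pos.mpr (by exact_mod_cast hd)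
  set t : ℝ := (Real.sqrt d)⁻¹ with ht
  have hdt2 : (d : ℝ) * t ^ 2 = 1 := by
    rw [ht, inv_pow, Real.sq_sqrt (by positivity : (0:ℝ) ≤ (d:ℝ))]
    exact mul_inv_cancel₀ (by exact_mod_cast (show d ≠ 0 by omega))
  have hlt : btlam d θ * t = 2 * Real.cos θ := by
    rw [btlam, ht]
    field_simp
  have key : Real.sin (((i:ℝ) + 1) * θ) + Real.sin (((i:ℝ) + 3) * θ)
      = 2 * Real.sin (((i:ℝ) + 2) * θ) * Real.cos θ := by
    have h1 : ((i:ℝ) + 1) * θ = ((i:ℝ) + 2) * θ - θ := by ring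
    have h2 : ((i:ℝ) + 3) * θ = ((i:ℝ) + 2) * θ + θ := by ring
    rw [h1, h2, Real.sin_add, Real.sin_sub]
    ring
  unfold btf
  rw [← ht]
  push_cast
  have e2 : t ^ (i + 2) = t ^ i * t ^ 2 := by ring
  have e1 : t ^ (i + 1) = t ^ i * t := by ring
  rw [e2, e1]
  rw [show ((i:ℝ) + 2 + 1) = (i:ℝ) + 3 by ring, show ((i:ℝ) + 1 + 1) = (i:ℝ) + 2 by ring]
  linear_combination (t ^ i) * key + (Real.sin (((i:ℝ) + 3) * θ) * t ^ i) * hdt2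
    - (Real.sin (((i:ℝ) + 2) * θ) * t ^ i) * hlt

end Recurrences

lemma sum_sin_ne {k j : ℕ} (hj1 : 1 ≤ j) (hjk : j ≤ k) {s : ℝ} (hs : 1 < s) :
    ∑ i ∈ Finset.range k, s ^ i * Real.sin ((i + 1) * (Real.pi * j / (k + 1))) ≠ 0 := by
  have hs0 : (0:ℝ) < s := by linarith
  set θ : ℝ := Real.pi * j / (k + 1) with hθ
  have hθ0 : 0 < θ := by
    apply div_pos
    · have h1 := Real.pi_pos
      have h2 : (0:ℝ) < j := by exact_mod_cast hj1
      positivity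
    · positivity
  have hθπ : θ < Real.pi := by
    rw [hθ, div_lt_iff₀ (by positivity)]
    have hπ := Real.pi_pos
    have : (j:ℝ) < (k:ℝ) + 1 := by exact_mod_cast Nat.lt_succ_of_le hjk
    nlinarith
  have hsinθ : 0 < Real.sin θ := Real.sin_pos_of_pos_of_lt_pi hθ0 hθπ
  set z : ℂ := (s : ℂ) * Complex.exp (θ * Complex.I) with hz
  have hzim : z.im = s * Real.sin θ := by
    simp [hz, Complex.exp_mul_I, Complex.mul_im, Complex.cos_ofReal_re, Complex.sin_ofReal_re,
      Complex.cos_ofReal_im, Complex.sin_ofReal_im]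
  have hz1 : z ≠ 1 := by
    intro h
    have : z.im = 0 := by rw [h]; simp
    rw [hzim] at this
    nlinarith
  have hpow : ∀ m : ℕ, z ^ m = (s ^ m : ℝ) * Complex.exp (((m * θ : ℝ)) * Complex.I) := by
    intro m
    rw [hz, mul_pow, ← Complex.exp_nat_mul]
    push_cast
    ring_nf
  have him' : ∀ m : ℕ, (z ^ m).im = s ^ m * Real.sin (m * θ) := by
    intro m
    rw [hpow]
    set x : ℝ := m * θ with hx
    clear_value x
    simp [Complex.exp_mul_I, Complex.mul_im, Complex.cos_ofReal_re, Complex.sin_ofReal_re,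
      Complex.cos_ofReal_im, Complex.sin_ofReal_im, ← Complex.ofReal_pow]
  have hgeom : ∑ m ∈ Finset.range (k + 1), z ^ m = (z ^ (k + 1) - 1) / (z - 1) :=
    geom_sum_eq hz1 _
  set a : ℝ := (-1 : ℝ) ^ j * s ^ (k + 1) with ha
  have hzk : z ^ (k + 1) = (a : ℂ) := by
    rw [hpow]
    have h1 : ((k + 1 : ℕ) : ℝ) * θ = Real.pi * j := by
      push_cast
      rw [hθ]; field_simp
    rw [h1]
    have h2 : ((Real.pi * j : ℝ) : ℂ) * Complex.I = (j : ℂ) * ((Real.pi : ℂ) * Complex.I) := by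
      push_cast; ring
    rw [h2, Complex.exp_nat_mul, Complex.exp_pi_mul_I, ha]
    push_cast
    ring
  have hane : a ≠ 1 := by
    have hsk : 1 < s ^ (k + 1) := one_lt_pow₀ hs (by omega)
    rcases Nat.even_or_odd j with he | ho
    · rw [ha, he.neg_one_pow]
      nlinarith
    · rw [ha, ho.neg_one_pow]
      nlinarith
  intro hS
  have him : (∑ m ∈ Finset.range (k + 1), z ^ m).im
      = s * ∑ i ∈ Finset.range k, s ^ i * Real.sin ((i + 1) * θ) := by
    rw [Finset.sum_range_succ', Complex.add_im, Complex.im_sum]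
    have h3 : ∀ i ∈ Finset.range k, (z ^ (i + 1)).im = s * (s ^ i * Real.sin ((i + 1) * θ)) := by
      intro i _
      rw [him' (i + 1)]
      push_cast
      ring
    rw [Finset.sum_congr rfl h3]
    simp [← Finset.mul_sum]
  have hrhs : ((z ^ (k + 1) - 1) / (z - 1)).im
      = (1 - a) * (s * Real.sin θ) / Complex.normSq (z - 1) := by
    rw [hzk, Complex.div_im]
    simp [Complex.sub_re, Complex.sub_im, hzim]
    ring
  have hnsq : 0 < Complex.normSq (z - 1) := by
    rw [Complex.normSq_pos]
    intro h
    exact hz1 (sub_eq_zero.mp h)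
  rw [hgeom, hrhs, hS, mul_zero] at him
  have hne : (1 - a) * (s * Real.sin θ) ≠ 0 := by
    apply mul_ne_zero
    · intro h; apply hane; linarith
    · positivity
  rcases div_eq_zero_iff.mp him with h | h
  · exact hne h
  · exact absurd h (ne_of_gt hnsq)


section EigenVectors

open SimpleGraph

variable {V : Type*} [Fintype V] {G : SimpleGraph V} {r : V} {k d : ℕ}

lemma adj_sym_sum (G : SimpleGraph V) (x y : V → ℝ) :
    ∑ v, ((adjMat G).mulVec x) v * y v = ∑ v, x v * ((adjMat G).mulVec y) v := by
  classical
  simp only [Matrix.mulVec, dotProduct, Finset.sum_mul, Finset.mul_sum]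
  rw [Finset.sum_comm]
  refine Finset.sum_congr rfl fun v _ => Finset.sum_congr rfl fun w _ => ?_
  simp only [adjMat, Matrix.of_apply]
  rw [SimpleGraph.adj_comm]
  ring

open scoped Classical in
/-- Lift a function of the level to a function on vertices. -/
noncomputable def levProj (G : SimpleGraph V) (r : V) (k : ℕ) :
    (Fin k → ℝ) →ₗ[ℝ] (V → ℝ) where
  toFun u := fun v => if h : G.dist r v < k then u ⟨G.dist r v, h⟩ else 0
  map_add' u w := by funext v; by_cases h : G.dist r v < k <;> simp [h]
  map_smul' c u := by funext v; by_cases h : G.dist r v < k <;> simp [h]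

variable (hk : 3 ≤ k) (hd : 2 ≤ d)
  (hT : IsGenBetheTree G r k (fun i => if i = 1 then d else d + 1))
include hk hd hT

lemma bethe_eigen {j : ℕ} (hj1 : 1 ≤ j) (hjk : j ≤ k) :
    (adjMat G).mulVec (fun v => btf d (Real.pi * j / (k + 1)) (G.dist r v))
      = btlam d (Real.pi * j / (k + 1)) •
          (fun v => btf d (Real.pi * j / (k + 1)) (G.dist r v)) := by
  classical
  set θ : ℝ := Real.pi * j / (k + 1) with hθ
  have hd1 : 1 ≤ d := by omega
  funext v
  set i := G.dist r v with hi
  have hL : (adjMat G).mulVec (fun v => btf d θ (G.dist r v)) v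
      = ∑ w ∈ G.neighborFinset v, btf d θ (G.dist r w) := by
    simp only [Matrix.mulVec, dotProduct, adjMat, Matrix.of_apply, ite_mul, one_mul,
      zero_mul]
    rw [SimpleGraph.neighborFinset_eq_filter, Finset.sum_filter]
  obtain ⟨hsub, hdisj⟩ := nbr_union hT.1 hi.symm
  have hsum : ∀ j' : ℕ, ∑ w ∈ nbr G r v j', btf d θ (G.dist r w)
      = ((nbr G r v j').card : ℝ) * btf d θ j' := by
    intro j'
    rw [Finset.sum_congr rfl (fun w hw => by rw [(mem_nbr.mp hw).2]), Finset.sum_const]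
    simp
  have hRHS : (btlam d θ • fun v => btf d θ (G.dist r v)) v = btlam d θ * btf d θ i := by
    simp [hi]
  rw [hRHS, hL, hsub, Finset.sum_union hdisj, hsum, hsum]
  have hbd : i ≤ k - 1 := hT.2.2.2.2 v
  rcases Nat.eq_zero_or_pos i with h0 | hpos
  · -- root
    rw [h0]
    have hc : ((nbr G r v (0+1)).card : ℝ) = d := by
      rw [child_card hk hd hT (by omega) (by omega)]
    have hz : ((nbr G r v (0-1)).card : ℝ) = 0 := by
      rw [show (0:ℕ) - 1 = 0 from rfl, root_nbr_zero hT.1 (by omega)]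
      simp
    rw [hc, hz]
    rw [zero_mul, add_zero]
    exact btf_rec0 hd1 θ
  · obtain ⟨m, hm⟩ : ∃ m, i = m + 1 := ⟨i - 1, by omega⟩
    have hvm : G.dist r v = m + 1 := by rw [← hi, hm]
    rw [hm] at hbd ⊢
    have hp : ((nbr G r v (m+1-1)).card : ℝ) = 1 := by
      rw [show m + 1 - 1 = m from rfl, parent_card hT.1 hvm]
      simp
    rcases Nat.lt_or_ge (m+1) (k-1) with hlt | hge
    · -- middle vertex
      have hc : ((nbr G r v (m+1+1)).card : ℝ) = d := by
        rw [child_card hk hd hT (by omega) hvm]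
      rw [hc, hp, one_mul, show m + 1 - 1 = m from rfl]
      have := btf_rec hd1 θ m
      rw [show m + 2 = m + 1 + 1 from rfl] at this
      linarith
    · -- leaf: m + 1 = k - 1
      have hmk : m + 1 = k - 1 := by omega
      have hc : ((nbr G r v (m+1+1)).card : ℝ) = 0 := by
        have : m + 1 + 1 = k := by omega
        rw [this, leaf_card hk hd hT (by omega)]
        simp
      rw [hc, hp, one_mul, zero_mul, zero_add]
      have hrec := btf_rec hd1 θ m
      have hzero : btf d θ (m + 2) = 0 := by
        unfold btf
        push_cast
        have harg : ((m:ℝ) + 2 + 1) * θ = Real.pi * j := by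
          rw [hθ]
          have hnat : m + 3 = k + 1 := by omega
          have hcast : ((m:ℝ) + 2 + 1) = (k:ℝ) + 1 := by exact_mod_cast hnat
          rw [hcast]
          field_simp
        rw [harg]
        have hz : Real.sin (Real.pi * j) = 0 := by
          rw [mul_comm]
          exact Real.sin_nat_mul_pi j
        rw [hz, zero_mul]
      rw [hzero, mul_zero, add_zero] at hrec
      rw [show m + 1 - 1 = m from rfl]
      exact hrec

lemma bethe_sum {j : ℕ} (hj1 : 1 ≤ j) (hjk : j ≤ k) :
    ∑ v : V, btf d (Real.pi * j / (k + 1)) (G.dist r v) ≠ 0 := by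
  classical
  set θ : ℝ := Real.pi * j / (k + 1) with hθ
  have hs1 : (1:ℝ) < Real.sqrt d := by
    have h2 : (2:ℝ) ≤ (d:ℝ) := by exact_mod_cast hd
    nlinarith [Real.sq_sqrt (by linarith : (0:ℝ) ≤ (d:ℝ)), Real.sqrt_nonneg (d:ℝ)]
  have hdt : (d:ℝ) * (Real.sqrt d)⁻¹ = Real.sqrt d := by
    have hss : Real.sqrt d * Real.sqrt d = (d:ℝ) :=
      Real.mul_self_sqrt (by positivity)
    rw [eq_comm, eq_mul_inv_iff_mul_eq₀ (by linarith : (0:ℝ) < Real.sqrt d).ne']; exact hss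
  rw [sum_levelwise hT.2.2.2.2 (by omega)]
  have hterm : ∀ i ∈ Finset.range k, ((lev G r i).card : ℝ) * btf d θ i
      = Real.sqrt d ^ i * Real.sin ((i + 1) * θ) := by
    intro i hi
    rw [Finset.mem_range] at hi
    rw [lev_card hk hd hT i (by omega)]
    unfold btf
    push_cast
    have : ((d:ℝ))^i * ((Real.sqrt d)⁻¹)^i = Real.sqrt d ^ i := by
      rw [← mul_pow, hdt]
    linear_combination Real.sin (((i:ℝ) + 1) * θ) * this
  rw [Finset.sum_congr rfl hterm]
  exact sum_sin_ne hj1 hjk hs1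

end EigenVectors

theorem betheTree_main_eigenvalues {V : Type*} [Fintype V] (G : SimpleGraph V) (r : V)
    (k d : ℕ) (hk : 3 ≤ k) (hd : 2 ≤ d)
    (hT : IsGenBetheTree G r k (fun i => if i = 1 then d else d + 1)) :
    (mainSpectrum G).Finite ∧ (mainSpectrum G).ncard = k := by
  classical
  have hπ := Real.pi_pos
  set θf : Fin k → ℝ := fun j => Real.pi * ((j.1 + 1 : ℕ) : ℝ) / ((k : ℝ) + 1) with hθf
  set lamf : Fin k → ℝ := fun j => btlam d (θf j) with hlamf
  set x : Fin k → V → ℝ := fun j v => btf d (θf j) (G.dist r v) with hx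
  have heig : ∀ j : Fin k, (adjMat G).mulVec (x j) = lamf j • x j := by
    intro j
    exact bethe_eigen hk hd hT (j := j.1 + 1) (by omega) (by have := j.2; omega)
  have hsum : ∀ j : Fin k, ∑ v, x j v ≠ 0 := by
    intro j
    exact bethe_sum hk hd hT (j := j.1 + 1) (by omega) (by have := j.2; omega)
  -- injectivity of the eigenvalues
  have hs0 : (0:ℝ) < Real.sqrt d := Real.sqrt_pos.mpr (by exact_mod_cast (by omega : 0 < d))
  have hθmem : ∀ j : Fin k, θf j ∈ Set.Icc (0:ℝ) Real.pi := by
    intro j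
    constructor
    · rw [hθf]
      positivity
    · rw [hθf, div_le_iff₀ (by positivity)]
      have : ((j.1 + 1 : ℕ) : ℝ) ≤ (k : ℝ) + 1 := by
        exact_mod_cast (by have := j.2; omega : j.1 + 1 ≤ k + 1)
      nlinarith
  have hinj : Function.Injective lamf := by
    intro a b hab
    rw [hlamf] at hab
    simp only [btlam] at hab
    have hcos : Real.cos (θf a) = Real.cos (θf b) := by
      have h2s : (2:ℝ) * Real.sqrt d ≠ 0 := by positivity
      exact mul_left_cancel₀ h2s hab
    have hθeq : θf a = θf b := Real.injOn_cos (hθmem a) (hθmem b) hcos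
    rw [hθf] at hθeq
    field_simp at hθeq
    have h : ((a.1:ℕ):ℝ) = ((b.1:ℕ):ℝ) := by have := hθeq; push_cast at this; linarith
    exact Fin.ext (by exact_mod_cast h)
  -- linear independence of the eigenvectors
  have hxne : ∀ j : Fin k, x j ≠ 0 := by
    intro j h0
    apply hsum j
    rw [h0]
    simp
  have hli : LinearIndependent ℝ x := by
    apply Module.End.eigenvectors_linearIndependent' (Matrix.mulVecLin (adjMat G)) lamf hinj x
    intro j
    refine ⟨Module.End.mem_eigenspace_iff.mpr ?_, hxne j⟩
    rw [Matrix.mulVecLin_apply, heig j]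
  -- the all-ones vector is in the span
  set u : Fin k → (Fin k → ℝ) := fun j i => btf d (θf j) i.1 with hu
  have hPhiu : ∀ j, levProj G r k (u j) = x j := by
    intro j
    funext v
    have hlt : G.dist r v < k := by have := hT.2.2.2.2 v; omega
    simp [levProj, hlt, hu, hx]
  have hliu : LinearIndependent ℝ u := by
    apply LinearIndependent.of_comp (levProj G r k)
    have : (⇑(levProj G r k) ∘ u) = x := funext hPhiu
    rw [this]
    exact hli
  haveI : Nonempty (Fin k) := ⟨⟨0, by omega⟩⟩
  have hcard : Fintype.card (Fin k) = Module.finrank ℝ (Fin k → ℝ) := by simp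
  have hspan : Submodule.span ℝ (Set.range u) = ⊤ := by
    have hb : ⇑(basisOfLinearIndependentOfCardEqFinrank hliu hcard) = u :=
      coe_basisOfLinearIndependentOfCardEqFinrank _ _
    have := (basisOfLinearIndependentOfCardEqFinrank hliu hcard).span_eq
    rwa [hb] at this
  have hones : (fun _ => (1:ℝ)) ∈ Submodule.span ℝ (Set.range u) := by
    rw [hspan]; trivial
  obtain ⟨c, hc⟩ := (Submodule.mem_span_range_iff_exists_fun ℝ).mp hones
  have hdecomp : ∀ v : V, ∑ j, c j * x j v = 1 := by
    intro v
    have h1 := congrArg (levProj G r k) hc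
    rw [map_sum] at h1
    have h2 := congrFun h1 v
    have hlt : G.dist r v < k := by have := hT.2.2.2.2 v; omega
    have h3 : (levProj G r k) (fun _ => (1:ℝ)) v = 1 := by simp [levProj, hlt]
    rw [h3] at h2
    rw [← h2]
    rw [Finset.sum_apply]
    refine Finset.sum_congr rfl fun j _ => ?_
    rw [_root_.map_smul, hPhiu j]
    simp
  -- the main spectrum is exactly the range of lamf
  have hmain : mainSpectrum G = Set.range lamf := by
    ext lam
    constructor
    · rintro ⟨y, hy, hysum⟩
      by_contra hno
      have horth : ∀ j, ∑ v, y v * x j v = 0 := by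
        intro j
        have h1 := adj_sym_sum G y (x j)
        rw [hy, heig j] at h1
        simp only [Pi.smul_apply, smul_eq_mul] at h1
        have hll : lam ≠ lamf j := fun h => hno ⟨j, h.symm⟩
        have hfac : (lam - lamf j) * (∑ v, y v * x j v) = 0 := by
          rw [sub_mul, Finset.mul_sum, Finset.mul_sum]
          rw [sub_eq_zero]
          calc ∑ v, lam * (y v * x j v) = ∑ v, lam * y v * x j v := by
                refine Finset.sum_congr rfl fun v _ => by ring
            _ = ∑ v, y v * (lamf j * x j v) := h1
            _ = ∑ v, lamf j * (y v * x j v) := by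
                refine Finset.sum_congr rfl fun v _ => by ring
        rcases mul_eq_zero.mp hfac with h | h
        · exact absurd (by linarith : lam = lamf j) hll
        · exact h
      apply hysum
      calc ∑ v, y v = ∑ v, y v * (∑ j, c j * x j v) := by
            refine Finset.sum_congr rfl fun v _ => by rw [hdecomp v, mul_one]
        _ = ∑ v, ∑ j, c j * (y v * x j v) := by
            refine Finset.sum_congr rfl fun v _ => by
              rw [Finset.mul_sum]
              refine Finset.sum_congr rfl fun j _ => by ring
        _ = ∑ j, c j * ∑ v, y v * x j v := by
            rw [Finset.sum_comm]
            refine Finset.sum_congr rfl fun j _ => by rw [Finset.mul_sum]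
        _ = 0 := by
            refine Finset.sum_eq_zero fun j _ => ?_
            rw [horth j, mul_zero]
    · rintro ⟨j, rfl⟩
      exact ⟨x j, heig j, hsum j⟩
  constructor
  · rw [hmain]
    exact Set.finite_range _
  · rw [hmain, ← Set.image_univ, Set.ncard_image_of_injective _ hinj, Set.ncard_univ]
    simp
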